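/- arXiv:1403.7582 — 2 statements merged into one kernel-verified Lean document; each statement's English description precedes it below -/
import Mathlib

section
/- Let (R, 𝔪) be a local ring, v a ℤ-valued valuation on R, and write ord_v(I) for the infimum of v over an ideal I. Suppose ideals I, J ⊆ R and an integer l satisfy I + 𝔪^l = J + 𝔪^l and ord_v(I) < l · ord_v(𝔪). Then ord_v(I) = ord_v(J). -/
lemma withtop_succ_mul (l : ℕ) (a : WithTop ℤ) :
    ((l + 1 : ℕ) : WithTop ℤ) * a = (l : WithTop ℤ) * a + a := by
  cases a with
  | top =>
      rw [WithTop.mul_top (by exact_mod_cast Nat.succ_ne_zero l), add_top]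
  | coe a =>
      rw [show ((l + 1 : ℕ) : WithTop ℤ) = ((l + 1 : ℤ) : WithTop ℤ) by push_cast; rfl,
        show ((l : ℕ) : WithTop ℤ) = ((l : ℤ) : WithTop ℤ) by push_cast; rfl,
        ← WithTop.coe_mul, ← WithTop.coe_mul, ← WithTop.coe_add]
      congr 1
      ring

lemma glb_ideal_nonneg {R : Type*} [CommRing R] (v : R → WithTop ℤ)
    (hmul : ∀ x y, v (x * y) = v x + v y) (K : Ideal R) (m : WithTop ℤ)
    (h : IsGLB (v '' (K : Set R)) m) : 0 ≤ m := by
  by_contra hneg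
  push_neg at hneg
  -- 0 is not a lower bound, so there is x ∈ K with v x < 0
  have h0 : ¬ (0 : WithTop ℤ) ∈ lowerBounds (v '' (K : Set R)) := by
    intro h0
    exact absurd (h.2 h0) (not_le.mpr hneg)
  rw [lowerBounds, Set.mem_setOf_eq] at h0
  push_neg at h0
  obtain ⟨y, ⟨x, hxK, rfl⟩, hy⟩ := h0
  lift v x to ℤ using (lt_of_lt_of_le hy le_top).ne with a ha
  have ha0 : a < 0 := by exact_mod_cast hy
  -- v (x ^ (n+1)) = (n+1) * a
  have hpow : ∀ n : ℕ, v (x ^ (n + 1)) = (((n + 1 : ℕ) * a : ℤ) : WithTop ℤ) := by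
    intro n
    induction n with
    | zero => simp [ha]
    | succ n ih =>
        rw [pow_succ, hmul, ih, ← ha, ← WithTop.coe_add]
        congr 1
        push_cast
        ring
  -- m ≤ v x, so m is not ⊤
  have hmle : m ≤ (a : WithTop ℤ) := h.1 ⟨x, hxK, ha.symm⟩
  have hmtop : m ≠ ⊤ := (hmle.trans_lt (WithTop.coe_lt_top a)).ne
  lift m to ℤ using hmtop with b hb
  -- m ≤ (n+1) * a for all n
  have key : ∀ n : ℕ, b ≤ (n + 1 : ℕ) * a := by
    intro n
    have hx' : x ^ (n + 1) ∈ K := Ideal.pow_mem_of_mem K hxK _ (Nat.succ_pos n)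
    have := h.1 ⟨x ^ (n + 1), hx', hpow n⟩
    exact_mod_cast this
  have hk := key b.natAbs
  have hb1 : -(b.natAbs : ℤ) ≤ b := neg_abs_le b |>.trans_eq' (by rw [Int.abs_eq_natAbs])
  have hmulle : ((b.natAbs : ℤ) + 1) * a ≤ -((b.natAbs : ℤ) + 1) := by
    have h1 : (0 : ℤ) < (b.natAbs : ℤ) + 1 := by positivity
    nlinarith
  have hk' : b ≤ ((b.natAbs : ℤ) + 1) * a := by exact_mod_cast hk
  linarith

lemma pow_maximal_bound {R : Type*} [CommRing R] [IsLocalRing R] (v : R → WithTop ℤ)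
    (hmul : ∀ x y, v (x * y) = v x + v y)
    (hadd : ∀ x y, min (v x) (v y) ≤ v (x + y))
    (mm : WithTop ℤ)
    (hmm : IsGLB (v '' (IsLocalRing.maximalIdeal R : Set R)) mm) :
    ∀ l : ℕ, ∀ x ∈ (IsLocalRing.maximalIdeal R) ^ (l + 1),
      ((l + 1 : ℕ) : WithTop ℤ) * mm ≤ v x := by
  intro l
  induction l with
  | zero =>
      intro x hx
      rw [pow_one] at hx
      simpa using hmm.1 ⟨x, hx, rfl⟩
  | succ n ih =>
      intro x hx
      rw [pow_succ] at hx
      refine Submodule.mul_induction_on hx ?_ ?_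
      · intro a ha b hb
        rw [hmul a b, withtop_succ_mul (n + 1) mm]
        exact add_le_add (ih a ha) (hmm.1 ⟨b, hb, rfl⟩)
      · intro a b h1 h2
        exact le_trans (le_min h1 h2) (hadd a b)

/-- Over a local ring, if `I + 𝔪^l = J + 𝔪^l` and `ord_v I < l · ord_v 𝔪`, then
`ord_v I = ord_v J`, where `ord_v` is the infimum of a valuation `v` over an ideal. -/
theorem ord_eq_of_adic_approx {R : Type*} [CommRing R] [IsLocalRing R]
    (v : R → WithTop ℤ)
    (hmul : ∀ x y, v (x * y) = v x + v y)
    (hadd : ∀ x y, min (v x) (v y) ≤ v (x + y))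
    (l : ℕ) (I J : Ideal R)
    (mI mJ mm : WithTop ℤ)
    (hmI : IsGLB (v '' (I : Set R)) mI)
    (hmJ : IsGLB (v '' (J : Set R)) mJ)
    (hmm : IsGLB (v '' (IsLocalRing.maximalIdeal R : Set R)) mm)
    (heq : I + (IsLocalRing.maximalIdeal R) ^ l = J + (IsLocalRing.maximalIdeal R) ^ l)
    (hlt : mI < (l : WithTop ℤ) * mm) :
    mI = mJ := by
  rcases Nat.eq_zero_or_pos l with rfl | hl
  · exfalso
    have h0 : (0 : WithTop ℤ) ≤ mI := glb_ideal_nonneg v hmul I mI hmI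
    simp only [Nat.cast_zero, zero_mul] at hlt
    exact absurd hlt (not_lt.mpr h0)
  · obtain ⟨l', rfl⟩ : ∃ l', l = l' + 1 := ⟨l - 1, (Nat.succ_pred_eq_of_pos hl).symm⟩
    set M := (IsLocalRing.maximalIdeal R) ^ (l' + 1) with hM
    have hA : ∀ x ∈ M, ((l' + 1 : ℕ) : WithTop ℤ) * mm ≤ v x :=
      pow_maximal_bound v hmul hadd mm hmm l'
    -- mI ≤ mJ : mI is a lower bound of v '' J
    have hIJ : mI ≤ mJ := by
      refine hmJ.2 ?_
      rintro y ⟨x, hxJ, rfl⟩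
      have hx' : x ∈ I + M := by
        rw [heq]
        exact (Ideal.add_eq_sup (I := J) (J := M)) ▸ Submodule.mem_sup_left hxJ
      rw [Ideal.add_eq_sup] at hx'
      obtain ⟨i, hi, m, hm, rfl⟩ := Submodule.mem_sup.mp hx'
      refine le_trans (le_min (hmI.1 ⟨i, hi, rfl⟩) ?_) (hadd i m)
      exact le_trans hlt.le (hA m hm)
    -- min mJ (l*mm) is a lower bound of v '' I
    have hmin : min mJ (((l' + 1 : ℕ) : WithTop ℤ) * mm) ≤ mI := by
      refine hmI.2 ?_
      rintro y ⟨x, hxI, rfl⟩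
      have hx' : x ∈ J + M := by
        rw [← heq]
        exact (Ideal.add_eq_sup (I := I) (J := M)) ▸ Submodule.mem_sup_left hxI
      rw [Ideal.add_eq_sup] at hx'
      obtain ⟨j, hj, m, hm, rfl⟩ := Submodule.mem_sup.mp hx'
      refine le_trans ?_ (hadd j m)
      exact le_min (min_le_left _ _ |>.trans (hmJ.1 ⟨j, hj, rfl⟩))
        (min_le_right _ _ |>.trans (hA m hm))
    rcases le_or_gt mJ (((l' + 1 : ℕ) : WithTop ℤ) * mm) with h | h
    · rw [min_eq_left h] at hmin
      exact le_antisymm hIJ hmin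
    · rw [min_eq_right h.le] at hmin
      exact absurd hlt (not_lt.mpr hmin)
end

section
/- Let (R, 𝔪) be a Noetherian local ring that is complete with respect to the 𝔪-adic topology. Suppose given, for each integer l ≥ l₀, an ideal I_l of R such that 𝔪^l ⊆ I_l and I_l = I_{l+1} + 𝔪^l. Then the ideal I := ⋂_{l ≥ l₀} I_l satisfies I + 𝔪^l = I_l for every l ≥ l₀. -/
/-- Let `(R, 𝔪)` be a Noetherian local ring, complete for the `𝔪`-adic topology. Given a
compatible system of ideals `I_l` with `𝔪^l ⊆ I_l` and `I_l = I_{l+1} + 𝔪^l` for `l ≥ l₀`,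
the ideal `I = ⋂_{l ≥ l₀} I_l` satisfies `I + 𝔪^l = I_l` for every `l ≥ l₀`. -/
theorem limit_ideal_of_adic_approximations {R : Type*} [CommRing R] [IsNoetherianRing R]
    [IsLocalRing R] [IsAdicComplete (IsLocalRing.maximalIdeal R) R]
    (l₀ : ℕ) (I : ℕ → Ideal R)
    (h1 : ∀ l, l₀ ≤ l → (IsLocalRing.maximalIdeal R) ^ l ≤ I l)
    (h2 : ∀ l, l₀ ≤ l → I l = I (l + 1) + (IsLocalRing.maximalIdeal R) ^ l) :
    ∀ l, l₀ ≤ l →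
      (⨅ (l' : ℕ) (_ : l₀ ≤ l'), I l') + (IsLocalRing.maximalIdeal R) ^ l = I l := by
  set m := IsLocalRing.maximalIdeal R with hm
  have hmono : ∀ a b, l₀ ≤ a → a ≤ b → I b ≤ I a := by
    intro a b ha hab
    induction b with
    | zero =>
      have : a = 0 := Nat.le_zero.mp hab
      simp [this]
    | succ n ih =>
      rcases Nat.lt_or_ge a (n + 1) with h | h
      · have han : a ≤ n := Nat.lt_succ_iff.mp h
        have h2n := h2 n (le_trans ha han)
        have : I (n + 1) ≤ I n := by rw [h2n]; exact le_sup_left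
        exact le_trans this (ih han)
      · have : a = n + 1 := le_antisymm hab h
        simp [this]
  intro l hl
  refine le_antisymm (sup_le (iInf₂_le l hl) (h1 l hl)) ?_
  intro x hx
  -- step function
  have hstep : ∀ n (y : R), y ∈ I (l + n) →
      ∃ z, z ∈ I (l + (n + 1)) ∧ y - z ∈ m ^ (l + n) := by
    intro n y hy
    rw [h2 (l + n) (le_trans hl (Nat.le_add_right _ _))] at hy
    rcases Submodule.mem_sup.mp hy with ⟨a, ha, b, hb, rfl⟩
    exact ⟨a, ha, by simpa using hb⟩
  -- construct the sequence
  let f : ∀ n : ℕ, {y : R // y ∈ I (l + n)} := fun n =>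
    Nat.rec ⟨x, by simpa using hx⟩
      (fun n p => ⟨Classical.choose (hstep n p.1 p.2),
        (Classical.choose_spec (hstep n p.1 p.2)).1⟩) n
  have hdiff : ∀ n, (f n).1 - (f (n + 1)).1 ∈ m ^ (l + n) := fun n =>
    (Classical.choose_spec (hstep n (f n).1 (f n).2)).2
  have hd : ∀ n k, k ≤ n → (f k).1 - (f n).1 ∈ m ^ (l + k) := by
    intro n
    induction n with
    | zero =>
      intro k hk
      obtain rfl := Nat.le_zero.mp hk
      simp
    | succ n ih =>
      intro k hk
      rcases Nat.lt_or_ge k (n + 1) with h | h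
      · have hkn := Nat.lt_succ_iff.mp h
        have h1' := ih k hkn
        have h2' : (f n).1 - (f (n + 1)).1 ∈ m ^ (l + k) :=
          Ideal.pow_le_pow_right (Nat.add_le_add_left hkn l) (hdiff n)
        have := add_mem h1' h2'
        simpa using this
      · have hkeq : k = n + 1 := le_antisymm hk h
        subst hkeq
        rw [sub_self]
        exact zero_mem _
  -- completeness
  obtain ⟨L, hL⟩ := IsPrecomplete.prec (IsAdicComplete.toIsPrecomplete (I := m))
    (f := fun n => (f n).1) (by
      intro a b hab
      rw [SModEq.sub_mem]
      have : (f a).1 - (f b).1 ∈ m ^ a := by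
        have := hd b a hab
        exact Ideal.pow_le_pow_right (Nat.le_add_left a l) this
      simpa [smul_eq_mul, Ideal.mul_top] using this)
  have hLn : ∀ n, (f n).1 - L ∈ m ^ n := by
    intro n
    have := (hL n)
    rw [SModEq.sub_mem] at this
    simpa [smul_eq_mul, Ideal.mul_top] using this
  have hLJ : L ∈ ⨅ (l' : ℕ) (_ : l₀ ≤ l'), I l' := by
    simp only [Submodule.mem_iInf]
    intro l' hl'
    have h1' : (f l').1 ∈ I l' :=
      hmono l' (l + l') hl' (Nat.le_add_left _ _) (f l').2
    have h2' : (f l').1 - L ∈ I l' := h1 l' hl' (hLn l')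
    have := sub_mem h1' h2'
    simpa using this
  have hxL : x - L ∈ m ^ l := by
    have ha : x - (f l).1 ∈ m ^ l := by exact hd l 0 (Nat.zero_le l)
    have hb : (f l).1 - L ∈ m ^ l := hLn l
    simpa using add_mem ha hb
  have : x = L + (x - L) := by ring
  rw [this]
  exact Submodule.add_mem_sup hLJ hxL
end
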